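/- Let H = (V, ℰ) be a β-acyclic hypergraph, let T be a join tree for H, and let S be the family of separators of H with respect to T. Then for every subfamily S' ⊆ S, the 2-section graph of the hypergraph formed by S' is chordal. -/

import Mathlib

open SimpleGraph

/-- `T` is a join tree for the hypergraph whose hyperedge family is `E` (indexed by `ι`):
`T` is a tree on the hyperedges and, for every vertex `v`, the hyperedges containing `v`
induce a connected (nonempty sets being preconnected) subgraph of `T`. -/
def IsJoinTree {V ι : Type*} (E : ι → Finset V) (T : SimpleGraph ι) : Prop :=
  T.IsTree ∧ ∀ v : V, (T.induce {i | v ∈ E i}).Preconnected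

/-- A hypergraph is acyclic if it admits a join tree. -/
def IsAcyclicHG {V ι : Type*} (E : ι → Finset V) : Prop :=
  ∃ T : SimpleGraph ι, IsJoinTree E T
/-- A hypergraph is β-acyclic if every (nonempty) subfamily of its hyperedges forms an
acyclic hypergraph. -/
def BetaAcyclic {V ι : Type*} (E : ι → Finset V) : Prop :=
  ∀ s : Set ι, s.Nonempty → IsAcyclicHG fun i : s => E i
/-- The separator associated to an edge `{a, b}` of a join tree: `E a ∩ E b`. -/
def sepOf {V ι : Type*} [DecidableEq V] (E : ι → Finset V) : Sym2 ι → Finset V :=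
  Sym2.lift ⟨fun a b => E a ∩ E b, fun a b => Finset.inter_comm _ _⟩
/-- The 2-section graph of a hypergraph: two distinct vertices are adjacent iff some
hyperedge contains both. -/
def twoSection {V ι : Type*} (E : ι → Finset V) : SimpleGraph V where
  Adj u v := u ≠ v ∧ ∃ i, u ∈ E i ∧ v ∈ E i
  symm := by
    constructor
    rintro u v ⟨h, i, hu, hv⟩
    exact ⟨h.symm, i, hv, hu⟩
  loopless := ⟨fun u h => h.1 rfl⟩
/-- A graph is chordal if every cycle with four or more vertices has a chord, i.e. an
edge of the graph between two vertices of the cycle that is not an edge of the cycle. -/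
def Chordal {α : Type*} (G : SimpleGraph α) : Prop :=
  ∀ (v : α) (c : G.Walk v v), c.IsCycle → 4 ≤ c.length →
    ∃ a b, a ∈ c.support ∧ b ∈ c.support ∧ G.Adj a b ∧ s(a, b) ∉ c.edges


section Aux

variable {α : Type*} {G : SimpleGraph α}

lemma walk_mem_edges_iff {u v : α} (w : G.Walk u v) (e : Sym2 α) :
    e ∈ w.edges ↔ ∃ m, m < w.length ∧ e = s(w.getVert m, w.getVert (m + 1)) := by
  induction w with
  | nil => simp
  | @cons x y z h q ih =>
    simp only [Walk.edges_cons, List.mem_cons, Walk.length_cons, ih]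
    constructor
    · rintro (rfl | ⟨m, hm, rfl⟩)
      · exact ⟨0, Nat.succ_pos _, by simp⟩
      · exact ⟨m + 1, by omega, by simp [Walk.getVert_cons_succ]⟩
    · rintro ⟨m, hm, rfl⟩
      cases m with
      | zero => left; simp
      | succ m => right; exact ⟨m, by omega, by simp [Walk.getVert_cons_succ]⟩

lemma walk_support_getElem? {u v : α} (w : G.Walk u v) :
    ∀ m, m ≤ w.length → w.support[m]? = some (w.getVert m) := by
  induction w with
  | nil =>
    intro m hm
    simp only [Walk.length_nil, Nat.le_zero] at hm
    subst hm; simp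
  | @cons x y z h q ih =>
    intro m hm
    cases m with
    | zero => simp
    | succ m =>
      simp only [Walk.support_cons, List.getElem?_cons_succ, Walk.getVert_cons_succ]
      exact ih m (by simpa [Nat.succ_le_succ_iff] using hm)

lemma cycle_getVert_inj {u : α} {c : G.Walk u u} (hc : c.IsCycle)
    {i j : ℕ} (hi : i < c.length) (hj : j < c.length)
    (hij : c.getVert i = c.getVert j) : i = j := by
  have hnd : c.support.tail.Nodup := hc.support_nodup
  have hlen : c.support.tail.length = c.length := by
    have := c.length_support
    have := c.support_eq_cons
    simp [List.length_tail, c.length_support]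
  have htail : ∀ m, m < c.length → c.support.tail[m]? = some (c.getVert (m + 1)) := by
    intro m hm
    have h1 := walk_support_getElem? c (m + 1) (by omega)
    rw [c.support_eq_cons, List.getElem?_cons_succ] at h1
    exact h1
  -- reduce to tail positions
  rcases Nat.eq_zero_or_pos i with rfl | hi0
  · rcases Nat.eq_zero_or_pos j with rfl | hj0
    · rfl
    · exfalso
      -- getVert j = getVert 0 = u = getVert length
      have h1 := htail (j - 1) (by omega)
      have h2 := htail (c.length - 1) (by omega)
      have hj1 : j - 1 + 1 = j := by omega
      have hl1 : c.length - 1 + 1 = c.length := by omega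
      rw [hj1] at h1
      rw [hl1] at h2
      have hju : c.getVert j = c.getVert c.length := by
        rw [c.getVert_length, ← hij, c.getVert_zero]
      have : (j - 1 : ℕ) = c.length - 1 := by
        apply (List.getElem?_inj (l := c.support.tail) (by omega) hnd).1
        rw [h1, h2, hju]
      omega
  · rcases Nat.eq_zero_or_pos j with rfl | hj0
    · exfalso
      have h1 := htail (i - 1) (by omega)
      have h2 := htail (c.length - 1) (by omega)
      have hi1 : i - 1 + 1 = i := by omega
      have hl1 : c.length - 1 + 1 = c.length := by omega
      rw [hi1] at h1
      rw [hl1] at h2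
      have hiu : c.getVert i = c.getVert c.length := by
        rw [c.getVert_length, hij, c.getVert_zero]
      have : (i - 1 : ℕ) = c.length - 1 := by
        apply (List.getElem?_inj (l := c.support.tail) (by omega) hnd).1
        rw [h1, h2, hiu]
      omega
    · have h1 := htail (i - 1) (by omega)
      have h2 := htail (j - 1) (by omega)
      have hi1 : i - 1 + 1 = i := by omega
      have hj1 : j - 1 + 1 = j := by omega
      rw [hi1] at h1; rw [hj1] at h2
      have : (i - 1 : ℕ) = j - 1 := by
        apply (List.getElem?_inj (l := c.support.tail) (by omega) hnd).1
        rw [h1, h2, hij]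
      omega

lemma reachable_side_aux {a b : α} {x y : α} (p : G.Walk x y)
    (hy : (G.deleteEdges {s(a, b)}).Reachable y a ∨ (G.deleteEdges {s(a, b)}).Reachable y b) :
    (G.deleteEdges {s(a, b)}).Reachable x a ∨ (G.deleteEdges {s(a, b)}).Reachable x b := by
  induction p with
  | nil => exact hy
  | @cons x' z' y' h q ih =>
    have hz := ih hy
    by_cases he : s(x', z') = s(a, b)
    · rw [Sym2.eq_iff] at he
      rcases he with ⟨rfl, rfl⟩ | ⟨rfl, rfl⟩
      · exact Or.inl (Reachable.refl _)
      · exact Or.inr (Reachable.refl _)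
    · have hadj : (G.deleteEdges {s(a, b)}).Adj x' z' := by
        rw [deleteEdges_adj]
        exact ⟨h, by simpa using he⟩
      rcases hz with hz | hz
      · exact Or.inl (hadj.reachable.trans hz)
      · exact Or.inr (hadj.reachable.trans hz)

lemma reachable_side {a b : α} {x : α} (p : G.Walk x a) :
    (G.deleteEdges {s(a, b)}).Reachable x a ∨ (G.deleteEdges {s(a, b)}).Reachable x b :=
  reachable_side_aux p (Or.inl (Reachable.refl _))

lemma cross_of_preconnected {S : Set α} (hpre : (G.induce S).Preconnected)
    {a b x y : α} (hx : x ∈ S) (hy : y ∈ S)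
    (hnr : ¬ (G.deleteEdges {s(a, b)}).Reachable x y) : a ∈ S ∧ b ∈ S := by
  obtain ⟨p⟩ := hpre ⟨x, hx⟩ ⟨y, hy⟩
  let φ : G.induce S →g G := ⟨Subtype.val, fun {u v} h => h⟩
  have hsup : ∀ z ∈ (p.map φ).support, z ∈ S := by
    intro z hz
    rw [Walk.support_map, List.mem_map] at hz
    obtain ⟨⟨z', hz'⟩, _, rfl⟩ := hz
    exact hz'
  by_cases he : s(a, b) ∈ (p.map φ).edges
  · exact ⟨hsup _ (Walk.fst_mem_support_of_mem_edges _ he),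
      hsup _ (Walk.snd_mem_support_of_mem_edges _ he)⟩
  · exfalso
    apply hnr
    refine ⟨(p.map φ).transfer (G.deleteEdges {s(a, b)}) ?_⟩
    intro e hes
    rw [edgeSet_deleteEdges]
    exact ⟨(p.map φ).edges_subset_edgeSet hes, by rintro rfl; exact he hes⟩

lemma adj_of_walk_support {x y : α} (hxy : x ≠ y) {S : Set α}
    (hS : ∀ z ∈ S, z = x ∨ z = y) (W : G.Walk x y)
    (hsup : ∀ z ∈ W.support, z ∈ S) : G.Adj x y := by
  cases W with
  | nil => exact absurd rfl hxy
  | @cons _ z _ h q =>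
    have hz : z ∈ S := hsup z (by rw [Walk.support_cons]; exact List.mem_cons_of_mem _ q.start_mem_support)
    rcases hS z hz with rfl | rfl
    · exact absurd h (G.loopless.irrefl _)
    · exact h

lemma adj_of_preconnected_pair {x y : α} (hxy : x ≠ y) {S : Set α}
    (hS : ∀ z ∈ S, z = x ∨ z = y) (hx : x ∈ S) (hy : y ∈ S)
    (hpre : (G.induce S).Preconnected) : G.Adj x y := by
  obtain ⟨p⟩ := hpre ⟨x, hx⟩ ⟨y, hy⟩
  let φ : G.induce S →g G := ⟨Subtype.val, fun {u v} h => h⟩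
  apply adj_of_walk_support hxy hS (p.map φ)
  intro z hz
  rw [Walk.support_map, List.mem_map] at hz
  obtain ⟨⟨z', hz'⟩, _, rfl⟩ := hz
  exact hz'

end Aux

lemma mem_sepOf {V ι : Type*} [DecidableEq V] (E : ι → Finset V) (a b : ι) (x : V) :
    x ∈ sepOf E s(a, b) ↔ x ∈ E a ∧ x ∈ E b := by
  simp [sepOf]

/-- If `H` is β-acyclic, `T` is a join tree for `H`, and `S` is the
family of separators of `H` with respect to `T`, then for every subfamily `S' ⊆ S` the
2-section graph of the hypergraph formed by `S'` is chordal. -/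
theorem stmt10 {V ι : Type*} [Fintype V] [Fintype ι] [DecidableEq V]
    (E : ι → Finset V)
    (hne : ∀ i, (E i).Nonempty) (hcov : ∀ v, ∃ i, v ∈ E i)
    (hbeta : BetaAcyclic E)
    (T : SimpleGraph ι) (hT : IsJoinTree E T) :
    ∀ s : Set (Sym2 ι), s ⊆ T.edgeSet →
      Chordal (twoSection fun e : s => sepOf E (e : Sym2 ι)) := by
  intro s hs
  set G := twoSection fun e : s => sepOf E (e : Sym2 ι) with hGdef
  intro v c hcyc hlen
  by_contra hchord
  push_neg at hchord
  set k := c.length with hk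
  have hlt : ∀ {m : ℕ}, m < k → m < c.length := fun {m} h => by omega
  have hle : ∀ {m : ℕ}, m ≤ k → m ≤ c.length := fun {m} h => by omega
  haveI : NeZero k := ⟨by omega⟩
  haveI : Fact (1 < k) := ⟨by omega⟩
  have hnz : ∀ m : ℕ, 0 < m → m < k → ((m : ZMod k) ≠ 0) := by
    intro m hm1 hm2 h
    rw [ZMod.natCast_eq_zero_iff] at h
    have := Nat.le_of_dvd hm1 h
    omega
  have hone : (1 : ZMod k) ≠ 0 := by
    have := hnz 1 (by omega) (by omega); simpa using this
  have htwo : (2 : ZMod k) ≠ 0 := by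
    have := hnz 2 (by omega) (by omega); simpa using this
  have hthree : (3 : ZMod k) ≠ 0 := by
    have := hnz 3 (by omega) (by omega); simpa using this
  set w : ZMod k → V := fun i => c.getVert i.val with hwdef
  have hwsucc : ∀ i : ZMod k, w (i + 1) = c.getVert (i.val + 1) := by
    intro i
    have hiv : i.val < k := i.val_lt
    have hv1 : (i + 1).val = (i.val + 1) % k := by
      rw [ZMod.val_add, ZMod.val_one]
    by_cases h : i.val + 1 < k
    · simp only [hwdef, hv1, Nat.mod_eq_of_lt h]
    · have hiv1 : i.val + 1 = k := by omega
      have h0 : (i + 1).val = 0 := by rw [hv1, hiv1, Nat.mod_self]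
      simp only [hwdef, h0, hiv1]
      rw [Walk.getVert_zero, hk, c.getVert_length]
  have hW1 : ∀ i : ZMod k, G.Adj (w i) (w (i + 1)) := by
    intro i
    rw [hwsucc]
    simp only [hwdef]
    exact c.adj_getVert_succ (hlt i.val_lt)
  have hW2 : Function.Injective w := by
    intro i j hij
    simp only [hwdef] at hij
    have := cycle_getVert_inj hcyc (hlt i.val_lt) (hlt j.val_lt) hij
    exact ZMod.val_injective k this
  have hsupp : ∀ i : ZMod k, w i ∈ c.support :=
    fun i => Walk.mem_support_iff_exists_getVert.2 ⟨i.val, by simp only [hwdef], hle i.val_lt.le⟩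
  have hNC : ∀ i j : ZMod k, G.Adj (w i) (w j) → j = i + 1 ∨ i = j + 1 := by
    intro i j hadj
    have hedge := hchord _ _ (hsupp i) (hsupp j) hadj
    rw [walk_mem_edges_iff] at hedge
    obtain ⟨m, hm, heq⟩ := hedge
    have hmk : m < k := by omega
    have h1 : c.getVert m = w (m : ZMod k) := by
      simp only [hwdef]
      rw [ZMod.val_cast_of_lt hmk]
    have h2 : c.getVert (m + 1) = w ((m : ZMod k) + 1) := by
      rw [hwsucc, ZMod.val_cast_of_lt hmk]
    rw [h1, h2, Sym2.eq_iff] at heq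
    rcases heq with ⟨ha, hb⟩ | ⟨ha, hb⟩
    · left; rw [hW2 ha, hW2 hb]
    · right; rw [hW2 ha, hW2 hb]
  have hsep : ∀ i : ZMod k, ∃ e : Sym2 ι, e ∈ s ∧ w i ∈ sepOf E e ∧ w (i + 1) ∈ sepOf E e := by
    intro i
    obtain ⟨-, e, h1, h2⟩ := (hW1 i : (twoSection fun e : s => sepOf E (e : Sym2 ι)).Adj (w i) (w (i + 1)))
    exact ⟨e.1, e.2, h1, h2⟩
  choose F hFs hF1 hF2 using hsep
  have habex : ∀ i : ZMod k, ∃ x y : ι, F i = s(x, y) := fun i =>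
    Sym2.inductionOn (f := fun e => ∃ x y, e = s(x, y)) (F i) fun x y => ⟨x, y, rfl⟩
  choose a b hab using habex
  have hsepi : ∀ (i : ZMod k) (x : V), x ∈ sepOf E (F i) ↔ x ∈ E (a i) ∧ x ∈ E (b i) := by
    intro i x
    rw [hab i, mem_sepOf]
  have hTadj : ∀ i : ZMod k, T.Adj (a i) (b i) := by
    intro i
    have h := hs (hFs i)
    rw [hab i] at h
    exact h
  have star : ∀ i j : ZMod k, j ≠ i → j ≠ i + 1 → w j ∉ sepOf E (F i) := by
    intro i j hji hji1 hmem
    have hadj1 : G.Adj (w j) (w i) :=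
      show (twoSection fun e : s => sepOf E (e : Sym2 ι)).Adj _ _ from ⟨fun h => hji (hW2 h), ⟨⟨F i, hFs i⟩, hmem, hF1 i⟩⟩
    rcases hNC j i hadj1 with h | h
    · have hadj2 : G.Adj (w j) (w (i + 1)) :=
        show (twoSection fun e : s => sepOf E (e : Sym2 ι)).Adj _ _ from ⟨fun h2 => hji1 (hW2 h2), ⟨⟨F i, hFs i⟩, hmem, hF2 i⟩⟩
      rcases hNC j (i + 1) hadj2 with h2 | h2
      · exact hji (add_right_cancel h2).symm
      · apply hthree; linear_combination -h - h2
    · exact hji1 h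
  have clean : ∀ i : ZMod k, ∃ cn : ι,
      (w i ∈ E cn ∧ w (i + 1) ∈ E cn) ∧ ∀ j : ZMod k, w j ∈ E cn → j = i ∨ j = i + 1 := by
    intro i
    by_cases hA : ∀ j : ZMod k, w j ∈ E (a i) → j = i ∨ j = i + 1
    · exact ⟨a i, ⟨((hsepi i _).1 (hF1 i)).1, ((hsepi i _).1 (hF2 i)).1⟩, hA⟩
    by_cases hB : ∀ j : ZMod k, w j ∈ E (b i) → j = i ∨ j = i + 1
    · exact ⟨b i, ⟨((hsepi i _).1 (hF1 i)).2, ((hsepi i _).1 (hF2 i)).2⟩, hB⟩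
    exfalso
    push_neg at hA hB
    obtain ⟨p, hpA, hpi, hpi1⟩ := hA
    obtain ⟨q, hqB, hqi, hqi1⟩ := hB
    set D := T.deleteEdges {s(a i, b i)} with hDdef
    have htree := hT.1
    have hbridge : ¬ D.Reachable (a i) (b i) := by
      have hbr := isAcyclic_iff_forall_adj_isBridge.mp htree.2 (hTadj i)
      rw [isBridge_iff] at hbr
      rw [hDdef]
      exact hbr
    have hRb : ¬ D.Reachable (b i) (a i) := fun h => hbridge h.symm
    have hcross : ∀ (x : V) (n m : ι), x ∈ E n → x ∈ E m →
        D.Reachable n (a i) → ¬ D.Reachable m (a i) → x ∈ sepOf E (F i) := by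
      intro x n m hxn hxm hRn hRm
      have h2 := cross_of_preconnected (hT.2 x) (a := a i) (b := b i)
        (x := n) (y := m) hxn hxm (fun hr => hRm (hr.symm.trans hRn))
      rw [hsepi]
      exact ⟨h2.1, h2.2⟩
    have hstep : ∀ j : ZMod k, j ≠ i → j + 1 ≠ i →
        (D.Reachable (a j) (a i) ↔ D.Reachable (a (j + 1)) (a i)) := by
      intro j hj hj1
      have hj1i1 : j + 1 ≠ i + 1 := fun h => hj (add_right_cancel h)
      constructor
      · intro hR
        by_contra hR'
        exact star i (j + 1) hj1 hj1i1
          (hcross (w (j + 1)) (a j) (a (j + 1)) ((hsepi j _).1 (hF2 j)).1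
            ((hsepi (j + 1) _).1 (hF1 (j + 1))).1 hR hR')
      · intro hR
        by_contra hR'
        exact star i (j + 1) hj1 hj1i1
          (hcross (w (j + 1)) (a (j + 1)) (a j) ((hsepi (j + 1) _).1 (hF1 (j + 1))).1
            ((hsepi j _).1 (hF2 j)).1 hR hR')
    have hPp : D.Reachable (a p) (a i) := by
      by_contra hR'
      exact star i p hpi hpi1
        (hcross (w p) (a i) (a p) hpA ((hsepi p _).1 (hF1 p)).1 (Reachable.refl _) hR')
    have hPq : ¬ D.Reachable (a q) (a i) := by
      intro hR
      exact star i q hqi hqi1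
        (hcross (w q) (a q) (b i) ((hsepi q _).1 (hF1 q)).1 hqB hR hRb)
    have hchain : ∀ t : ℕ, t ≤ k - 2 →
        (D.Reachable (a (i + 1)) (a i) ↔ D.Reachable (a (i + 1 + (t : ZMod k))) (a i)) := by
      intro t
      induction t with
      | zero => intro _; norm_num
      | succ t ih =>
        intro ht
        have ih' := ih (by omega)
        have hcast : (i + 1 + (t : ZMod k)) + 1 = i + 1 + ((t + 1 : ℕ) : ZMod k) := by
          push_cast; ring
        have hjne : i + 1 + (t : ZMod k) ≠ i := by
          intro h
          refine hnz (1 + t) (by omega) (by omega) ?_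
          push_cast
          linear_combination h
        have hj1ne : i + 1 + (t : ZMod k) + 1 ≠ i := by
          intro h
          refine hnz (2 + t) (by omega) (by omega) ?_
          push_cast
          linear_combination h
        rw [ih', ← hcast]
        exact hstep (i + 1 + (t : ZMod k)) hjne hj1ne
    have reprG : ∀ j : ZMod k, j ≠ i → ∃ t : ℕ, t ≤ k - 2 ∧ j = i + 1 + (t : ZMod k) := by
      intro j hj
      refine ⟨(j - i - 1).val, ?_, ?_⟩
      · have hvlt := (j - i - 1).val_lt
        by_contra hgt
        have hveq : (j - i - 1).val = k - 1 := by omega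
        apply hj
        have h1 : (((j - i - 1).val : ℕ) : ZMod k) = j - i - 1 := ZMod.natCast_zmod_val _
        rw [hveq] at h1
        have h2 : ((k - 1 : ℕ) : ZMod k) + 1 = 0 := by
          have h3 : ((k - 1 : ℕ) : ZMod k) + 1 = ((k - 1 + 1 : ℕ) : ZMod k) := by
            push_cast; ring
          rw [h3]
          have hk1 : k - 1 + 1 = k := by omega
          rw [hk1, ZMod.natCast_self]
        linear_combination h2 - h1
      · rw [ZMod.natCast_zmod_val]; ring
    obtain ⟨tp, htp, hpeq⟩ := reprG p hpi
    obtain ⟨tq, htq, hqeq⟩ := reprG q hqi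
    have h1 := hchain tp htp
    have h2 := hchain tq htq
    rw [← hpeq] at h1
    rw [← hqeq] at h2
    exact hPq (h2.mp (h1.mpr hPp))
  choose cn hcn1 hcn2 using clean
  obtain ⟨T', hT'tree, hT'conn⟩ := hbeta (Set.range cn) ⟨cn 0, Set.mem_range_self 0⟩
  have hcninj : Function.Injective cn := by
    intro i j hij
    have h1 := hcn2 i (j + 1) (by rw [hij]; exact (hcn1 j).2)
    have h2 := hcn2 j (i + 1) (by rw [← hij]; exact (hcn1 i).2)
    rcases h2 with h2 | h2
    · rcases h1 with h1 | h1
      · exfalso; apply htwo; linear_combination h1 + h2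
      · exfalso; apply hone; linear_combination h1 + h2
    · exact add_right_cancel h2
  have hwc1 : ∀ i : ZMod k, w (i + 1) ∈ E (cn i) := fun i => (hcn1 i).2
  have hwc2 : ∀ i : ZMod k, w (i + 1) ∈ E (cn (i + 1)) := fun i => (hcn1 (i + 1)).1
  set u : ZMod k → ↥(Set.range cn) := fun i => ⟨cn i, Set.mem_range_self i⟩ with hudef
  have huinj : Function.Injective u := fun i j h => hcninj (congrArg Subtype.val h)
  have hadjT' : ∀ i : ZMod k, T'.Adj (u i) (u (i + 1)) := by
    intro i
    have hune : u i ≠ u (i + 1) := by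
      intro h
      apply hone
      linear_combination -(huinj h)
    refine adj_of_preconnected_pair hune (S := {m : ↥(Set.range cn) | w (i + 1) ∈ E m.1}) ?_ ?_ ?_
      (hT'conn (w (i + 1)))
    · rintro ⟨z, hz⟩ hmem
      obtain ⟨j, rfl⟩ := hz
      rcases hcn2 j (i + 1) hmem with h | h
      · right
        exact Subtype.ext (congrArg cn h).symm
      · left
        exact Subtype.ext (congrArg cn (add_right_cancel h)).symm
    · exact hwc1 i
    · exact hwc2 i
  haveI : Fintype ↥(Set.range cn) := (Set.toFinite (Set.range cn)).fintype
  haveI : DecidableEq ↥(Set.range cn) := Classical.decEq _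
  haveI : Fintype ↥(T'.edgeSet) := (Set.toFinite _).fintype
  have hcardedge : T'.edgeFinset.card + 1 = Fintype.card ↥(Set.range cn) := hT'tree.card_edgeFinset
  have hcard_le : Fintype.card ↥(Set.range cn) ≤ k := by
    have h1 := Fintype.card_le_of_surjective (Set.rangeFactorization cn)
      Set.rangeFactorization_surjective
    rwa [ZMod.card] at h1
  have hk_le : k ≤ T'.edgeFinset.card := by
    have h1 : (Finset.univ : Finset (ZMod k)).card = k := by
      rw [Finset.card_univ, ZMod.card]
    have h2 : (Finset.univ : Finset (ZMod k)).card ≤ T'.edgeFinset.card := by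
      apply Finset.card_le_card_of_injOn (fun i => s(u i, u (i + 1)))
      · intro i _
        rw [Finset.mem_coe, mem_edgeFinset]
        exact (hadjT' i)
      · intro i _ j _ hij
        rw [Sym2.eq_iff] at hij
        rcases hij with ⟨h1', h2'⟩ | ⟨h1', h2'⟩
        · exact huinj h1'
        · exfalso
          apply htwo
          have e1 : i = j + 1 := huinj h1'
          have e2 : i + 1 = j := huinj h2'
          linear_combination e2 - e1
    omega
  omega
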